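/- Let K^{BTBM}_t(x) = 2∫₀^∞ (2πs)^{−d/2} e^{−|x|²/(2s)} (2πt)^{−1/2} e^{−s²/(2t)} ds. Then for every d ≥ 4 and every t > 0, ∫_{ℝ^d} [K^{BTBM}_t(x)]² dx = ∞. -/

import Mathlib

open Real MeasureTheory Set

noncomputable def heatK (d : ℕ) (s : ℝ) (x : EuclideanSpace ℝ (Fin d)) : ℝ :=
  (2 * π * s) ^ (-(d : ℝ)/2) * Real.exp (-‖x‖^2 / (2*s))

noncomputable def btbmK (d : ℕ) (t : ℝ) (x : EuclideanSpace ℝ (Fin d)) : ℝ :=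
  2 * ∫ s in Ioi (0:ℝ),
      heatK d s x * ((2 * π * t) ^ (-(1:ℝ)/2) * Real.exp (-s^2 / (2*t)))

section Aux

/-- For `u ≥ 0`, `u^d ≤ d^d * exp u`. -/
lemma aux_pow_le_exp (d : ℕ) (hd : 1 ≤ d) (u : ℝ) (hu : 0 ≤ u) :
    u ^ d ≤ (d:ℝ) ^ d * Real.exp u := by
  have hd' : (0:ℝ) < d := by exact_mod_cast hd
  have h1 : u / d ≤ Real.exp (u / d) := by
    have := Real.add_one_le_exp (u / d)
    nlinarith [Real.exp_pos (u / d)]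
  have h2 : (u / d) ^ d ≤ (Real.exp (u / d)) ^ d :=
    pow_le_pow_left₀ (by positivity) h1 d
  rw [← Real.exp_nat_mul] at h2
  have hud : (d:ℝ) * (u / d) = u := by field_simp
  rw [hud] at h2
  calc u ^ d = ((d:ℝ) * (u / d)) ^ d := by rw [hud]
    _ = (d:ℝ) ^ d * (u / d) ^ d := mul_pow _ _ _
    _ ≤ (d:ℝ) ^ d * Real.exp u := by
        exact mul_le_mul_of_nonneg_left h2 (by positivity)

/-- Bound on the heat kernel radial factor for small times. -/
lemma aux_heat_bound (d : ℕ) (hd : 1 ≤ d) {r : ℝ} (hr : 0 < r) {s : ℝ}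
    (hs : 0 < s) (hs1 : s ≤ 1) :
    s ^ (-(d:ℝ)/2) * Real.exp (-r^2 / (2*s)) ≤ (d:ℝ)^d * (2/r^2)^d := by
  have hu : (0:ℝ) < r^2/(2*s) := by positivity
  have hB : (0:ℝ) < (r^2/(2*s)) ^ d := by positivity
  have key := aux_pow_le_exp d hd _ hu.le
  have harg : -r^2 / (2*s) = -(r^2/(2*s)) := by ring
  have h1 : Real.exp (-r^2 / (2*s)) ≤ (d:ℝ)^d / (r^2/(2*s)) ^ d := by
    rw [harg, Real.exp_neg, inv_eq_one_div, div_le_div_iff₀ (Real.exp_pos _) hB]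
    nlinarith [key]
  have h2 : (d:ℝ)^d / (r^2/(2*s)) ^ d = (d:ℝ)^d * (2/r^2)^d * s ^ (d:ℕ) := by
    rw [div_pow, mul_pow]
    field_simp
    rw [← mul_pow]; congr 1; field_simp
  have h3 : s ^ (-(d:ℝ)/2) * Real.exp (-r^2 / (2*s))
      ≤ s ^ (-(d:ℝ)/2) * ((d:ℝ)^d * (2/r^2)^d * s ^ (d:ℕ)) := by
    rw [← h2]
    exact mul_le_mul_of_nonneg_left h1 (Real.rpow_nonneg hs.le _)
  refine h3.trans ?_
  have h4 : s ^ (-(d:ℝ)/2) * ((d:ℝ)^d * (2/r^2)^d * s ^ (d:ℕ))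
      = (d:ℝ)^d * (2/r^2)^d * s ^ ((d:ℝ)/2) := by
    rw [← Real.rpow_natCast s d, ← mul_assoc, mul_comm (s ^ (-(d:ℝ)/2)) _, mul_assoc,
      ← Real.rpow_add hs]
    congr 1
    ring
  rw [h4]
  have h5 : s ^ ((d:ℝ)/2) ≤ 1 := Real.rpow_le_one hs.le hs1 (by positivity)
  exact mul_le_of_le_one_right (by positivity) h5

/-- Integrability of the BTBM integrand. -/
lemma aux_integrableOn (d : ℕ) (hd : 1 ≤ d) {t : ℝ} (ht : 0 < t)
    (x : EuclideanSpace ℝ (Fin d)) (hx : 0 < ‖x‖) :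
    IntegrableOn (fun s => heatK d s x * ((2 * π * t) ^ (-(1:ℝ)/2) * Real.exp (-s^2 / (2*t))))
      (Ioi (0:ℝ)) := by
  set Ct : ℝ := (2 * π * t) ^ (-(1:ℝ)/2) with hCt
  have hCtpos : 0 < Ct := Real.rpow_pos_of_pos (by positivity) _
  set F : ℝ → ℝ := fun s => heatK d s x * (Ct * Real.exp (-s^2 / (2*t))) with hF
  have hFnn : ∀ s ∈ Ioi (0:ℝ), 0 ≤ F s := by
    intro s hs
    have hs' : (0:ℝ) < s := hs
    simp only [hF, heatK]
    have : (0:ℝ) < 2 * π * s := by positivity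
    positivity
  have hcont : ContinuousOn F (Ioi (0:ℝ)) := by
    simp only [hF, heatK]
    apply ContinuousOn.mul
    · apply ContinuousOn.mul
      · apply ContinuousOn.rpow_const
        · exact (continuous_const.mul continuous_id).continuousOn
        · intro s hs
          exact Or.inl (by have : (0:ℝ) < s := hs; positivity)
      · apply Real.continuous_exp.comp_continuousOn
        apply ContinuousOn.div continuousOn_const
          (continuous_const.mul continuous_id).continuousOn
        intro s hs
        have : (0:ℝ) < s := hs
        exact mul_ne_zero two_ne_zero this.ne'
    · exact (continuous_const.mul (Real.continuous_exp.comp (by fun_prop))).continuousOn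
  have hmeas : AEStronglyMeasurable F (volume.restrict (Ioi (0:ℝ))) :=
    hcont.aestronglyMeasurable measurableSet_Ioi
  rw [show Ioi (0:ℝ) = Ioc 0 1 ∪ Ioi 1 from (Ioc_union_Ioi_eq_Ioi zero_le_one).symm]
  have hsub1 : Ioc (0:ℝ) 1 ⊆ Ioi 0 := Ioc_subset_Ioi_self
  have hsub2 : Ioi (1:ℝ) ⊆ Ioi 0 := Ioi_subset_Ioi zero_le_one
  refine IntegrableOn.union ?_ ?_
  · -- bounded by a constant on Ioc 0 1
    refine Integrable.mono'
      (g := fun _ => (2*π) ^ (-(d:ℝ)/2) * ((d:ℝ)^d * (2/‖x‖^2)^d) * Ct)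
      (integrableOn_const measure_Ioc_lt_top.ne)
      (hmeas.mono_measure (Measure.restrict_mono hsub1 le_rfl)) ?_
    · filter_upwards [ae_restrict_mem measurableSet_Ioc] with s hs
      have hs0 : (0:ℝ) < s := hs.1
      have hs1 : s ≤ 1 := hs.2
      rw [Real.norm_eq_abs, abs_of_nonneg (hFnn s hs0)]
      show F s ≤ (2*π) ^ (-(d:ℝ)/2) * ((d:ℝ)^d * (2/‖x‖^2)^d) * Ct
      have hsplit : (2 * π * s) ^ (-(d:ℝ)/2)
          = (2*π) ^ (-(d:ℝ)/2) * s ^ (-(d:ℝ)/2) :=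
        Real.mul_rpow (by positivity) hs0.le
      have hb := aux_heat_bound d hd (r := ‖x‖) hx hs0 hs1
      have hexp1 : Real.exp (-s^2/(2*t)) ≤ 1 :=
        Real.exp_le_one_iff.2 (by
          have : (0:ℝ) ≤ s^2/(2*t) := by positivity
          linarith [this, (show -s^2/(2*t) = -(s^2/(2*t)) by ring)])
      simp only [hF, heatK, hsplit]
      calc (2*π) ^ (-(d:ℝ)/2) * s ^ (-(d:ℝ)/2) * Real.exp (-‖x‖^2 / (2*s))
            * (Ct * Real.exp (-s^2 / (2*t)))
          ≤ (2*π) ^ (-(d:ℝ)/2) * ((d:ℝ)^d * (2/‖x‖^2)^d) * (Ct * 1) := by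
            rw [mul_assoc ((2*π) ^ (-(d:ℝ)/2)) _ _]
            have h2pi : (0:ℝ) < (2*π) ^ (-(d:ℝ)/2) := Real.rpow_pos_of_pos (by positivity) _
            apply mul_le_mul
            · exact mul_le_mul_of_nonneg_left hb h2pi.le
            · apply mul_le_mul_of_nonneg_left hexp1 hCtpos.le
            · positivity
            · positivity
        _ = (2*π) ^ (-(d:ℝ)/2) * ((d:ℝ)^d * (2/‖x‖^2)^d) * Ct := by ring
  · -- dominated by a Gaussian on Ioi 1
    have hgauss : Integrable (fun s : ℝ => ((2*π) ^ (-(d:ℝ)/2) * Ct)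
        * Real.exp (-(1/(2*t)) * s^2)) volume :=
      (integrable_exp_neg_mul_sq (by positivity : (0:ℝ) < 1/(2*t))).const_mul _
    refine Integrable.mono' hgauss.integrableOn
      (hmeas.mono_measure (Measure.restrict_mono hsub2 le_rfl)) ?_
    filter_upwards [ae_restrict_mem measurableSet_Ioi] with s hs
    have hs1 : (1:ℝ) < s := hs
    have hs0 : (0:ℝ) < s := lt_trans one_pos hs1
    rw [Real.norm_eq_abs, abs_of_nonneg (hFnn s hs0)]
    have hpow : (2 * π * s) ^ (-(d:ℝ)/2) ≤ (2*π) ^ (-(d:ℝ)/2) := by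
      apply Real.rpow_le_rpow_of_nonpos (by positivity)
      · nlinarith [pi_pos]
      · have : (0:ℝ) ≤ (d:ℝ) := Nat.cast_nonneg d
        linarith
    have hexp2 : Real.exp (-‖x‖^2/(2*s)) ≤ 1 :=
      Real.exp_le_one_iff.2 (by
        have : (0:ℝ) ≤ ‖x‖^2/(2*s) := by positivity
        linarith [this, (show -‖x‖^2/(2*s) = -(‖x‖^2/(2*s)) by ring)])
    have harg : -s^2/(2*t) = -(1/(2*t)) * s^2 := by ring
    simp only [hF, heatK, harg]
    calc (2 * π * s) ^ (-(d:ℝ)/2) * Real.exp (-‖x‖^2 / (2*s))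
          * (Ct * Real.exp (-(1/(2*t)) * s^2))
        ≤ (2*π) ^ (-(d:ℝ)/2) * 1 * (Ct * Real.exp (-(1/(2*t)) * s^2)) := by
          apply mul_le_mul_of_nonneg_right _ (by positivity)
          apply mul_le_mul hpow hexp2 (Real.exp_nonneg _)
            (le_of_lt (Real.rpow_pos_of_pos (by positivity) _))
      _ = (2*π) ^ (-(d:ℝ)/2) * Ct * Real.exp (-(1/(2*t)) * s^2) := by ring

/-- The key lower bound for `btbmK` near the origin. -/
lemma aux_lower (d : ℕ) (hd : 4 ≤ d) {t : ℝ} (ht : 0 < t) :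
    ∃ c : ℝ, 0 < c ∧ ∀ x : EuclideanSpace ℝ (Fin d), 0 < ‖x‖ → ‖x‖ ≤ 1/2 →
      c * ‖x‖ ^ ((2:ℝ) - d) ≤ btbmK d t x := by
  have hDpos : (0:ℝ) < d := by
    have : (4:ℝ) ≤ d := by exact_mod_cast hd
    linarith
  have hD4 : (4:ℝ) ≤ d := by exact_mod_cast hd
  set Ct : ℝ := (2 * π * t) ^ (-(1:ℝ)/2) with hCtdef
  have hCtpos : 0 < Ct := Real.rpow_pos_of_pos (by positivity) _
  set c₀ : ℝ := (2*π) ^ (-(d:ℝ)/2) * Real.exp (-(1:ℝ)/2) * (Ct * Real.exp (-(1:ℝ)/(2*t)))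
    with hc₀def
  have hc₀pos : 0 < c₀ := by positivity
  refine ⟨2 * c₀ / d, by positivity, ?_⟩
  intro x hx hx2
  set r : ℝ := ‖x‖ with hrdef
  have hr2 : (0:ℝ) < r^2 := by positivity
  have hr2lt1 : r^2 < 1 := by nlinarith
  set p : ℝ := -(d:ℝ)/2 with hpdef
  have hInt := aux_integrableOn d (by omega) ht x hx
  have hnn : 0 ≤ᵐ[volume.restrict (Ioi (0:ℝ))]
      fun s => heatK d s x * (Ct * Real.exp (-s^2 / (2*t))) := by
    filter_upwards [ae_restrict_mem measurableSet_Ioi] with s hs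
    have hs' : (0:ℝ) < s := hs
    have h2pis : (0:ℝ) < 2 * π * s := by positivity
    simp only [heatK]
    positivity
  have hsub : Ioc (r^2) 1 ⊆ Ioi (0:ℝ) := fun s hs => lt_trans hr2 hs.1
  have step1 : ∫ s in Ioc (r^2) 1, heatK d s x * (Ct * Real.exp (-s^2 / (2*t)))
      ≤ ∫ s in Ioi (0:ℝ), heatK d s x * (Ct * Real.exp (-s^2 / (2*t))) :=
    setIntegral_mono_set hInt hnn hsub.eventuallyLE
  have hIntSub : IntegrableOn (fun s => heatK d s x * (Ct * Real.exp (-s^2 / (2*t))))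
      (Ioc (r^2) 1) := hInt.mono_set hsub
  have h0uIcc : (0:ℝ) ∉ uIcc (r^2) 1 := by
    rw [Set.uIcc_of_le hr2lt1.le]
    exact fun h => absurd h.1 (not_le.2 hr2)
  have hIntPow : IntegrableOn (fun s => c₀ * s ^ p) (Ioc (r^2) 1) :=
    ((intervalIntegral.intervalIntegrable_rpow (Or.inr h0uIcc)).1).const_mul c₀
  have step2 : ∫ s in Ioc (r^2) 1, c₀ * s ^ p
      ≤ ∫ s in Ioc (r^2) 1, heatK d s x * (Ct * Real.exp (-s^2 / (2*t))) := by
    refine setIntegral_mono_on hIntPow hIntSub measurableSet_Ioc ?_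
    intro s hs
    have hs0 : (0:ℝ) < s := lt_trans hr2 hs.1
    have hs1 : s ≤ 1 := hs.2
    have hsplit : (2 * π * s) ^ p = (2*π) ^ p * s ^ p :=
      Real.mul_rpow (by positivity) hs0.le
    have hexp1 : Real.exp (-(1:ℝ)/2) ≤ Real.exp (-r^2 / (2*s)) := by
      apply Real.exp_le_exp.2
      have h1 : r^2/(2*s) ≤ 1/2 := by
        rw [div_le_div_iff₀ (by positivity) (by norm_num)]
        nlinarith [hs.1]
      have e1 : -r^2/(2*s) = -(r^2/(2*s)) := by ring
      have e2 : -(1:ℝ)/2 = -(1/2 : ℝ) := by ring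
      rw [e1, e2]
      exact neg_le_neg h1
    have hexp2 : Real.exp (-(1:ℝ)/(2*t)) ≤ Real.exp (-s^2 / (2*t)) := by
      apply Real.exp_le_exp.2
      have h1 : s^2 ≤ 1 := by nlinarith
      have e1 : -s^2/(2*t) = -(s^2/(2*t)) := by ring
      have e2 : -(1:ℝ)/(2*t) = -(1/(2*t) : ℝ) := by ring
      rw [e1, e2]
      apply neg_le_neg
      exact (div_le_div_iff_of_pos_right (by positivity)).2 h1
    have hheq : heatK d s x * (Ct * Real.exp (-s^2 / (2*t)))
        = (2*π) ^ p * s ^ p * Real.exp (-r^2 / (2*s)) * (Ct * Real.exp (-s^2 / (2*t))) := by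
      simp only [heatK, ← hpdef, ← hrdef, hsplit]
    rw [hheq]
    calc c₀ * s ^ p
        = ((2*π) ^ p * s ^ p) * (Real.exp (-(1:ℝ)/2) * (Ct * Real.exp (-(1:ℝ)/(2*t)))) := by
          rw [hc₀def]; ring
      _ ≤ ((2*π) ^ p * s ^ p) * (Real.exp (-r^2 / (2*s)) * (Ct * Real.exp (-s^2 / (2*t)))) := by
          apply mul_le_mul_of_nonneg_left _ (by positivity)
          exact mul_le_mul hexp1 (mul_le_mul_of_nonneg_left hexp2 hCtpos.le)
            (by positivity) (by positivity)
      _ = (2*π) ^ p * s ^ p * Real.exp (-r^2 / (2*s)) * (Ct * Real.exp (-s^2 / (2*t))) := by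
          ring
  have hple : p ≤ -2 := by rw [hpdef]; linarith
  have hpne : p ≠ -1 := by intro h; rw [h] at hple; norm_num at hple
  have step3 : ∫ s in Ioc (r^2) 1, c₀ * s ^ p
      = c₀ * ((1 - (r^2) ^ (p+1)) / (p+1)) := by
    rw [integral_const_mul, ← intervalIntegral.integral_of_le hr2lt1.le,
      integral_rpow (Or.inr ⟨hpne, h0uIcc⟩), Real.one_rpow]
  have hA : ((r^2:ℝ)) ^ (p+1) = r ^ ((2:ℝ)-d) := by
    rw [← Real.rpow_natCast r 2, ← Real.rpow_mul hx.le]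
    congr 1
    rw [hpdef]
    push_cast
    ring
  have hA4 : (4:ℝ) ≤ r ^ ((2:ℝ)-d) := by
    have h1 : ((1:ℝ)/2) ^ ((2:ℝ)-d) ≤ r ^ ((2:ℝ)-d) :=
      Real.rpow_le_rpow_of_nonpos hx hx2 (by linarith)
    have h2 : ((1:ℝ)/2) ^ ((2:ℝ)-d) = (2:ℝ) ^ ((d:ℝ)-2) := by
      rw [one_div, Real.inv_rpow (by norm_num : (0:ℝ) ≤ 2),
        ← Real.rpow_neg (by norm_num : (0:ℝ) ≤ 2)]
      congr 1; ring
    have h3 : (4:ℝ) = (2:ℝ) ^ ((2:ℝ)) := by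
      rw [show ((2:ℝ):ℝ) = ((2:ℕ):ℝ) by norm_num, Real.rpow_natCast]; norm_num
    rw [h3]
    calc (2:ℝ) ^ ((2:ℝ)) ≤ (2:ℝ) ^ ((d:ℝ)-2) :=
          Real.rpow_le_rpow_of_exponent_le one_le_two (by linarith)
      _ ≤ r ^ ((2:ℝ)-d) := by rw [← h2]; exact h1
  have hV : r ^ ((2:ℝ)-d) / d ≤ (1 - (r^2) ^ (p+1)) / (p+1) := by
    rw [hA]
    have hq : p + 1 = -(((d:ℝ))/2 - 1) := by rw [hpdef]; ring
    have heq : (1 - r ^ ((2:ℝ)-d))/(p+1) = (r ^ ((2:ℝ)-d) - 1)/((d:ℝ)/2 - 1) := by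
      rw [hq, show (1 - r ^ ((2:ℝ)-d)) = -(r ^ ((2:ℝ)-d) - 1) by ring, neg_div_neg_eq]
    rw [heq, div_le_div_iff₀ hDpos (by linarith : (0:ℝ) < (d:ℝ)/2 - 1)]
    nlinarith [hA4]
  calc (2*c₀/d) * r ^ ((2:ℝ)-d) = 2 * (c₀ * (r ^ ((2:ℝ)-d) / d)) := by ring
    _ ≤ 2 * (c₀ * ((1 - (r^2) ^ (p+1)) / (p+1))) := by
        have := mul_le_mul_of_nonneg_left hV hc₀pos.le
        linarith
    _ = 2 * ∫ s in Ioc (r^2) 1, c₀ * s ^ p := by rw [step3]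
    _ ≤ 2 * ∫ s in Ioc (r^2) 1, heatK d s x * (Ct * Real.exp (-s^2 / (2*t))) := by
        linarith [step2]
    _ ≤ 2 * ∫ s in Ioi (0:ℝ), heatK d s x * (Ct * Real.exp (-s^2 / (2*t))) := by
        linarith [step1]
    _ = btbmK d t x := by rw [btbmK, hCtdef]

end Aux

theorem btbmK_sq_integral_infinite (d : ℕ) (hd : 4 ≤ d) (t : ℝ) (ht : 0 < t) :
    ∫⁻ x : EuclideanSpace ℝ (Fin d), ENNReal.ofReal ((btbmK d t x)^2) = ⊤ := by
  obtain ⟨c, hc, hlow⟩ := aux_lower d hd ht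
  haveI : Nonempty (Fin d) := ⟨⟨0, by omega⟩⟩
  set E := EuclideanSpace ℝ (Fin d) with hE
  have hdim : Module.finrank ℝ E = d := finrank_euclideanSpace_fin
  set f : E → ENNReal := fun x => ENNReal.ofReal ((btbmK d t x)^2) with hf
  set β : ℕ → ℝ := fun n => (1/2 : ℝ)^(n+1) with hβ
  have hβpos : ∀ n, 0 < β n := fun n => by positivity
  have hβ1 : ∀ n, β n ≤ 1/2 := fun n => by
    calc β n = (1/2:ℝ)^(n+1) := rfl
      _ ≤ (1/2:ℝ)^1 := pow_le_pow_of_le_one (by norm_num) (by norm_num) (by omega)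
      _ = 1/2 := pow_one _
  have hβstep : ∀ n, β (n+1) = β n * (1/2) := fun n => by
    simp only [hβ]
    ring
  have hβanti : ∀ m n : ℕ, m ≤ n → β n ≤ β m := fun m n h =>
    pow_le_pow_of_le_one (by norm_num) (by norm_num) (by omega)
  set A : ℕ → Set E := fun n => Metric.ball 0 (β n) \ Metric.ball 0 (β (n+1)) with hA
  have hmeasA : ∀ n, MeasurableSet (A n) := fun n =>
    measurableSet_ball.diff measurableSet_ball
  have hmemA : ∀ n x, x ∈ A n → β (n+1) ≤ ‖x‖ ∧ ‖x‖ < β n := by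
    intro n x hx
    constructor
    · have := hx.2
      rw [mem_ball_zero_iff] at this
      exact le_of_not_gt this
    · have := hx.1
      rwa [mem_ball_zero_iff] at this
  have hdisj : Pairwise (Function.onFun Disjoint A) := by
    intro m n hmn
    rw [Function.onFun, Set.disjoint_left]
    intro x hxm hxn
    obtain ⟨h1m, h2m⟩ := hmemA m x hxm
    obtain ⟨h1n, h2n⟩ := hmemA n x hxn
    rcases lt_or_gt_of_ne hmn with h | h
    · exact absurd (h2n.trans_le (hβanti (m+1) n (by omega))) (not_lt.2 h1m)
    · exact absurd (h2m.trans_le (hβanti (n+1) m (by omega))) (not_lt.2 h1n)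
  have hhalf : (0:ℝ) < 1 - (1/2:ℝ)^d := by
    have : (1/2:ℝ)^d < 1 := pow_lt_one₀ (by norm_num) (by norm_num) (by omega)
    linarith
  set K : ENNReal := ENNReal.ofReal (c^2 * (1 - (1/2:ℝ)^d)) * volume (Metric.ball (0:E) 1)
    with hK
  have hK0 : K ≠ 0 := by
    apply mul_ne_zero
    · exact (ENNReal.ofReal_pos.2 (by positivity)).ne'
    · exact (Metric.measure_ball_pos volume 0 one_pos).ne'
  have hlowern : ∀ n, K ≤ ∫⁻ x in A n, f x := by
    intro n
    set b : ℝ := β n with hb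
    have hbpos : 0 < b := hβpos n
    have hb1 : b ≤ 1 := (hβ1 n).trans (by norm_num)
    set v : ℝ := c * b ^ ((2:ℝ) - d) with hv
    have hvpos : 0 < v := by
      have := Real.rpow_pos_of_pos hbpos ((2:ℝ) - d)
      positivity
    -- pointwise lower bound on the annulus
    have claim1 : ∀ x ∈ A n, ENNReal.ofReal (v^2) ≤ f x := by
      intro x hx
      obtain ⟨h1, h2⟩ := hmemA n x hx
      have hx0 : 0 < ‖x‖ := lt_of_lt_of_le (hβpos (n+1)) h1
      have hx12 : ‖x‖ ≤ 1/2 := le_of_lt (lt_of_lt_of_le h2 (hβ1 n))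
      have hlb := hlow x hx0 hx12
      have hmono : b ^ ((2:ℝ) - d) ≤ ‖x‖ ^ ((2:ℝ) - d) := by
        apply Real.rpow_le_rpow_of_nonpos hx0 h2.le
        have : (4:ℝ) ≤ d := by exact_mod_cast hd
        linarith
      have hvb : v ≤ btbmK d t x := by
        calc v = c * b ^ ((2:ℝ) - d) := hv
          _ ≤ c * ‖x‖ ^ ((2:ℝ) - d) := mul_le_mul_of_nonneg_left hmono hc.le
          _ ≤ btbmK d t x := hlb
      apply ENNReal.ofReal_le_ofReal
      exact pow_le_pow_left₀ hvpos.le hvb 2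
    have claim2 : ENNReal.ofReal (v^2) * volume (A n) ≤ ∫⁻ x in A n, f x := by
      have hind : ∀ x, (A n).indicator (fun _ => ENNReal.ofReal (v^2)) x
          ≤ (A n).indicator f x := by
        intro x
        by_cases hx : x ∈ A n
        · simpa [hx] using claim1 x hx
        · simp [hx]
      calc ENNReal.ofReal (v^2) * volume (A n)
          = ∫⁻ x in A n, ENNReal.ofReal (v^2) := (setLIntegral_const _ _).symm
        _ = ∫⁻ x, (A n).indicator (fun _ => ENNReal.ofReal (v^2)) x :=
            (lintegral_indicator (hmeasA n) _).symm
        _ ≤ ∫⁻ x, (A n).indicator f x := lintegral_mono hind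
        _ = ∫⁻ x in A n, f x := lintegral_indicator (hmeasA n) _
    have claim3 : volume (A n)
        = ENNReal.ofReal (b^d - (β (n+1))^d) * volume (Metric.ball (0:E) 1) := by
      have hsub : Metric.ball (0:E) (β (n+1)) ⊆ Metric.ball 0 (β n) :=
        Metric.ball_subset_ball (hβanti n (n+1) (by omega))
      rw [hA]
      rw [measure_diff hsub measurableSet_ball.nullMeasurableSet measure_ball_lt_top.ne]
      rw [Measure.addHaar_ball _ _ (hβpos n).le, Measure.addHaar_ball _ _ (hβpos (n+1)).le,
        hdim]
      rw [ENNReal.ofReal_sub _ (pow_nonneg (hβpos (n+1)).le d)]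
      rw [ENNReal.sub_mul (fun _ _ => measure_ball_lt_top.ne)]
    have claim4 : K ≤ ENNReal.ofReal (v^2) * volume (A n) := by
      rw [claim3, ← mul_assoc, ← ENNReal.ofReal_mul (by positivity : (0:ℝ) ≤ v^2), hK]
      apply mul_le_mul_left
      apply ENNReal.ofReal_le_ofReal
      -- real arithmetic
      have hΔ : b^d - (β (n+1))^d = b^d * (1 - (1/2:ℝ)^d) := by
        rw [hβstep n, mul_pow]
        ring
      have e2 : (b ^ ((2:ℝ)-(d:ℝ)))^(2:ℕ) * b^(d:ℕ) = b ^ ((4:ℝ)-d) := by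
        rw [← Real.rpow_natCast (b ^ ((2:ℝ)-(d:ℝ))) 2, ← Real.rpow_mul hbpos.le,
          ← Real.rpow_natCast b d, ← Real.rpow_add hbpos]
        congr 1
        push_cast
        ring
      have e3 : 1 ≤ b ^ ((4:ℝ)-d) := by
        apply Real.one_le_rpow_of_pos_of_le_one_of_nonpos hbpos hb1
        have : (4:ℝ) ≤ d := by exact_mod_cast hd
        linarith
      rw [hΔ]
      calc c^2 * (1 - (1/2:ℝ)^d) = c^2 * (1 - (1/2:ℝ)^d) * 1 := (mul_one _).symm
        _ ≤ c^2 * (1 - (1/2:ℝ)^d) * (b ^ ((4:ℝ)-d)) := by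
            apply mul_le_mul_of_nonneg_left e3 (by positivity)
        _ = v^2 * (b^d * (1 - (1/2:ℝ)^d)) := by
            rw [hv, mul_pow, ← e2]
            ring
    exact claim4.trans claim2
  rw [eq_top_iff]
  calc (⊤:ENNReal) = ∑' _ : ℕ, K := (ENNReal.tsum_const_eq_top_of_ne_zero hK0).symm
    _ ≤ ∑' n, ∫⁻ x in A n, f x := ENNReal.tsum_le_tsum hlowern
    _ = ∫⁻ x in ⋃ n, A n, f x := (lintegral_iUnion hmeasA hdisj f).symm
    _ ≤ ∫⁻ x, f x := setLIntegral_le_lintegral _ _
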